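/- Every thin (κ, X)-list is κ-slender. That is, if D = ⟨d_x : x ∈ P_κ(X)⟩ is a (κ, X)-list for which there is a club C ⊆ P_κ(X) with |{d_x ∩ y : y ⊆ x ∈ P_κ(X)}| < κ for every y ∈ C, then for all sufficiently large θ there is a club C' ⊆ P_κ(H(θ)) such that for all M ∈ C' and all y ∈ M ∩ P_κ(X), d_{M∩X} ∩ y ∈ M. -/

import Mathlib

open Cardinal

universe u

/-- `H(θ)`: the class of sets hereditarily of cardinality `< θ`. -/
def Hset (θ : Cardinal.{u + 1}) : Set ZFSet.{u} :=
  {x : ZFSet.{u} | ZFSet.Hereditarily (fun y => #y.toSet < θ) x}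

lemma hereditarily_mono {p q : ZFSet.{u} → Prop} (h : ∀ z, p z → q z) :
    ∀ x : ZFSet.{u}, ZFSet.Hereditarily p x → ZFSet.Hereditarily q x := by
  intro x
  induction x using ZFSet.inductionOn with
  | _ x ih =>
    intro hx
    rw [ZFSet.hereditarily_iff] at hx ⊢
    exact ⟨h _ hx.1, fun y hy => ih y hy (hx.2 y hy)⟩

lemma Hset_mono {θ₁ θ₂ : Cardinal.{u+1}} (h : θ₁ ≤ θ₂) : Hset θ₁ ⊆ Hset θ₂ :=
  fun x hx => hereditarily_mono (fun z hz => hz.trans_le h) x hx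

lemma exists_mem_Hset (x : ZFSet.{u}) : ∃ θ : Cardinal.{u+1}, x ∈ Hset θ := by
  induction x using ZFSet.inductionOn with
  | _ x ih =>
    choose f hf using fun (z : x.toSet) => ih z ((Iff.rfl).mp z.2)
    refine ⟨Order.succ (#x.toSet) ⊔ ⨆ z : x.toSet, f z, ?_⟩
    refine ZFSet.hereditarily_iff.mpr ⟨?_, ?_⟩
    · exact lt_of_lt_of_le (Order.lt_succ _) le_sup_left
    · intro y hy
      exact Hset_mono
        ((le_ciSup (Cardinal.bddAbove_range _) (⟨y, (Iff.rfl).mpr hy⟩ : x.toSet)).trans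
          le_sup_right) (hf ⟨y, (Iff.rfl).mpr hy⟩)

lemma mem_Hset_of_subset {θ : Cardinal.{u+1}} {e y : ZFSet.{u}} (hy : y ∈ Hset θ)
    (h : e.toSet ⊆ y.toSet) : e ∈ Hset θ := by
  have hy' := ZFSet.hereditarily_iff.mp hy
  refine ZFSet.hereditarily_iff.mpr ⟨lt_of_le_of_lt (Cardinal.mk_le_mk_of_subset h) hy'.1, ?_⟩
  intro z hz
  exact hy'.2 z ((Iff.rfl).mp (h ((Iff.rfl).mpr hz)))


/-- `C` is a club in `P_κ(A)`: elements are subsets of `A` of size `< κ`, `C` is closed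
under unions of nonempty `⊆`-chains of length `< κ`, and `C` is cofinal. -/
def ClubIn (κ : Cardinal.{u + 1}) (A : Set ZFSet.{u}) (C : Set (Set ZFSet.{u})) : Prop :=
  (∀ y ∈ C, y ⊆ A ∧ #y < κ) ∧
    (∀ D : Set (Set ZFSet.{u}), D ⊆ C → D.Nonempty → #D < κ → IsChain (· ⊆ ·) D →
      ⋃₀ D ∈ C) ∧
    (∀ x : Set ZFSet.{u}, x ⊆ A → #x < κ → ∃ y ∈ C, x ⊆ y)

/-- `S` is stationary in `P_κ(A)`: it meets every club in `P_κ(A)`. -/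
def StatIn (κ : Cardinal.{u + 1}) (A : Set ZFSet.{u}) (S : Set (Set ZFSet.{u})) : Prop :=
  (∀ y ∈ S, y ⊆ A ∧ #y < κ) ∧ ∀ C : Set (Set ZFSet.{u}), ClubIn κ A C → (S ∩ C).Nonempty

/-- `d` is `(μ, M)`-approximated (as a subset of `x`): for every `z ∈ M ∩ P_μ(x)` there is
`e ∈ M` with `d ∩ z = e ∩ z`. -/
def Approx (μ : Cardinal.{u + 1}) (M : Set ZFSet.{u}) (x : ZFSet.{u})
    (d : Set ZFSet.{u}) : Prop :=
  ∀ z : ZFSet.{u}, z ∈ M → z.toSet ⊆ x.toSet → #z.toSet < μ →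
    ∃ e ∈ M, d ∩ z.toSet = e.toSet ∩ z.toSet

/-- `d` is `M`-guessed: there is `e ∈ M` with `d ∩ M = e ∩ M`. -/
def Guessed (M : Set ZFSet.{u}) (d : Set ZFSet.{u}) : Prop :=
  ∃ e ∈ M, d ∩ M = e.toSet ∩ M

/-- Every `(μ, M)`-approximated subset of `x` is `M`-guessed. -/
def GuessingFor (μ : Cardinal.{u + 1}) (M : Set ZFSet.{u}) (x : ZFSet.{u}) : Prop :=
  ∀ d : Set ZFSet.{u}, d ⊆ x.toSet → Approx μ M x d → Guessed M d

/-- The `(κ, X)`-list `d` is `μ`-`Y`-slender: for all sufficiently large `θ` there is a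
club `C ⊆ P_κ(H(θ))` such that for all `M ∈ C` with `M ∩ X ∈ Y` and all
`y ∈ M ∩ P_μ(X)`, `d_{M ∩ X} ∩ y ∈ M`. -/
def Slender (μ κ : Cardinal.{u + 1}) (X : Set ZFSet.{u}) (Y : Set (Set ZFSet.{u}))
    (d : Set ZFSet.{u} → Set ZFSet.{u}) : Prop :=
  ∃ θ₀ : Cardinal.{u + 1}, ∀ θ : Cardinal.{u + 1}, θ₀ ≤ θ →
    ∃ C : Set (Set ZFSet.{u}), ClubIn κ (Hset θ) C ∧
      ∀ M ∈ C, M ∩ X ∈ Y →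
        ∀ y : ZFSet.{u}, y ∈ M → y.toSet ⊆ X → #y.toSet < μ →
          ∃ e ∈ M, e.toSet = d (M ∩ X) ∩ y.toSet

/-- `b` is a cofinal branch of the `(κ, X)`-list `d`. -/
def CofBranch (κ : Cardinal.{u + 1}) (X : Set ZFSet.{u})
    (d : Set ZFSet.{u} → Set ZFSet.{u}) (b : Set ZFSet.{u}) : Prop :=
  b ⊆ X ∧ ∀ x : Set ZFSet.{u}, x ⊆ X → #x < κ →
    ∃ z : Set ZFSet.{u}, z ⊆ X ∧ #z < κ ∧ x ⊆ z ∧ b ∩ x = d z ∩ x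

/-- `b` is a `Y`-ineffable branch of the `(κ, X)`-list `d`: the set of `x ∈ Y` with
`b ∩ x = d_x` is stationary in `P_κ(X)`. -/
def IneffBranch (κ : Cardinal.{u + 1}) (X : Set ZFSet.{u}) (Y : Set (Set ZFSet.{u}))
    (d : Set ZFSet.{u} → Set ZFSet.{u}) (b : Set ZFSet.{u}) : Prop :=
  b ⊆ X ∧ StatIn κ X {x : Set ZFSet.{u} | x ∈ Y ∧ b ∩ x = d x}

/-- Every thin `(κ, X)`-list is `κ`-slender: if there is a club `C ⊆ P_κ(X)` such that
`|{d_x ∩ y : y ⊆ x ∈ P_κ(X)}| < κ` for every `y ∈ C`, then for all sufficiently large `θ`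
there is a club `C' ⊆ P_κ(H(θ))` such that for all `M ∈ C'` and all `y ∈ M ∩ P_κ(X)`,
`d_{M ∩ X} ∩ y ∈ M`. -/
theorem stmt10 (κ : Cardinal.{u + 1}) (hreg : κ.IsRegular)
    (hunc : Cardinal.aleph0 < κ)
    (X : Set ZFSet.{u}) (hX : κ ≤ #X)
    (d : Set ZFSet.{u} → Set ZFSet.{u}) (hd : ∀ x : Set ZFSet.{u}, d x ⊆ x)
    (C : Set (Set ZFSet.{u})) (hC : ClubIn κ X C)
    (hthin : ∀ y ∈ C,
      #{s : Set ZFSet.{u} | ∃ x : Set ZFSet.{u}, x ⊆ X ∧ #x < κ ∧ y ⊆ x ∧ s = d x ∩ y} < κ) :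
    Slender κ κ X {x : Set ZFSet.{u} | x ⊆ X ∧ #x < κ} d := by
  classical
  choose h hh using exists_mem_Hset.{u}
  refine ⟨⨆ x : X, h x, fun θ hθ => ?_⟩
  have hXH : ∀ x ∈ X, x ∈ Hset θ := fun x hx =>
    Hset_mono ((le_ciSup (Cardinal.bddAbove_range _) (⟨x, hx⟩ : X)).trans hθ) (hh x)
  -- the covering function into the club C
  obtain ⟨Y', hY'⟩ : ∃ Y' : ZFSet.{u} → Set ZFSet.{u},
      ∀ y : ZFSet.{u}, y.toSet ⊆ X → #y.toSet < κ → Y' y ∈ C ∧ y.toSet ⊆ Y' y := by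
    choose f hf using hC.2.2
    exact ⟨fun y => if hy : y.toSet ⊆ X ∧ #y.toSet < κ then f y.toSet hy.1 hy.2 else ∅,
      fun y hy1 hy2 => by beta_reduce; rw [dif_pos ⟨hy1, hy2⟩]; exact ⟨(hf _ _ _).1, (hf _ _ _).2⟩⟩
  -- the set of traces on a set y'
  set S : Set ZFSet.{u} → Set (Set ZFSet.{u}) := fun y' =>
    {s | ∃ x : Set ZFSet.{u}, x ⊆ X ∧ #x < κ ∧ y' ⊆ x ∧ s = d x ∩ y'} with hS
  -- the closure operator on single sets
  set B : ZFSet.{u} → Set ZFSet.{u} := fun y =>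
    Y' y ∪ (fun s => ZFSet.sep (· ∈ s) y) '' S (Y' y) with hB
  have hBcard : ∀ y : ZFSet.{u}, y.toSet ⊆ X → #y.toSet < κ → #(B y) < κ := by
    intro y hy1 hy2
    refine lt_of_le_of_lt (Cardinal.mk_union_le _ _) (Cardinal.add_lt_of_lt hreg.aleph0_le ?_ ?_)
    · exact (hC.1 _ (hY' y hy1 hy2).1).2
    · exact lt_of_le_of_lt Cardinal.mk_image_le (hthin _ (hY' y hy1 hy2).1)
  have hBsub : ∀ y : ZFSet.{u}, y ∈ Hset θ → y.toSet ⊆ X → #y.toSet < κ → B y ⊆ Hset θ := by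
    intro y hyH hy1 hy2 z hz
    rcases hz with hz | ⟨s, _, rfl⟩
    · exact hXH z ((hC.1 _ (hY' y hy1 hy2).1).1 hz)
    · refine mem_Hset_of_subset hyH ?_
      rw [show ∀ (a : ZFSet.{u}) (p : ZFSet.{u} → Prop), (ZFSet.sep p a).toSet = {x ∈ a.toSet | p x} from ZFSet.coe_sep]
      exact Set.sep_subset _ _
  -- the closure operator on models
  set F : Set ZFSet.{u} → Set ZFSet.{u} := fun A =>
    A ∪ ⋃ y ∈ {z ∈ A | z.toSet ⊆ X ∧ #z.toSet < κ}, B y with hF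
  have hFcard : ∀ A : Set ZFSet.{u}, #A < κ → #(F A) < κ := by
    intro A hA
    refine lt_of_le_of_lt (Cardinal.mk_union_le _ _)
      (Cardinal.add_lt_of_lt hreg.aleph0_le hA ?_)
    have hsub : #({z ∈ A | z.toSet ⊆ X ∧ #z.toSet < κ}) < κ :=
      lt_of_le_of_lt (Cardinal.mk_le_mk_of_subset (Set.sep_subset _ _)) hA
    refine lt_of_le_of_lt (Cardinal.mk_biUnion_le _ _)
      (Cardinal.mul_lt_of_lt hreg.aleph0_le hsub ?_)
    refine Cardinal.iSup_lt_of_isRegular hreg hsub ?_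
    rintro ⟨y, _, hy1, hy2⟩
    exact hBcard y hy1 hy2
  have hFsub : ∀ A : Set ZFSet.{u}, A ⊆ Hset θ → F A ⊆ Hset θ := by
    intro A hA z hz
    rcases hz with hz | hz
    · exact hA hz
    · simp only [Set.mem_iUnion] at hz
      obtain ⟨y, ⟨hyA, hy1, hy2⟩, hzB⟩ := hz
      exact hBsub y (hA hyA) hy1 hy2 hzB
  have hFincl : ∀ A : Set ZFSet.{u}, A ⊆ F A := fun A => Set.subset_union_left
  have hFB : ∀ A : Set ZFSet.{u}, ∀ y ∈ A, y.toSet ⊆ X → #y.toSet < κ → B y ⊆ F A := by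
    intro A y hyA hy1 hy2
    refine Set.subset_union_of_subset_right ?_ _
    exact Set.subset_biUnion_of_mem (show y ∈ {z ∈ A | _} from ⟨hyA, hy1, hy2⟩)
  -- the club
  refine ⟨{M : Set ZFSet.{u} | M ⊆ Hset θ ∧ #M < κ ∧
      ∀ y ∈ M, y.toSet ⊆ X → #y.toSet < κ → B y ⊆ M}, ⟨?_, ?_, ?_⟩, ?_⟩
  · exact fun M hM => ⟨hM.1, hM.2.1⟩
  · -- closure under chains
    rintro D hD ⟨M₀, hM₀⟩ hDκ _
    refine ⟨?_, ?_, ?_⟩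
    · exact fun z hz => by
        obtain ⟨M, hMD, hzM⟩ := hz
        exact (hD hMD).1 hzM
    · rw [Set.sUnion_eq_iUnion]
      exact (Cardinal.card_iUnion_lt_iff_forall_of_isRegular hreg hDκ).2
        fun M => (hD M.2).2.1
    · rintro y ⟨M, hMD, hyM⟩ hy1 hy2
      exact ((hD hMD).2.2 y hyM hy1 hy2).trans (Set.subset_sUnion_of_mem hMD)
  · -- cofinality
    intro x hx hxκ
    set g : ℕ → Set ZFSet.{u} := fun n => F^[n] x with hg
    have hgsucc : ∀ n, g (n + 1) = F (g n) := fun n => Function.iterate_succ_apply' F n x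
    have hgH : ∀ n, g n ⊆ Hset θ := by
      intro n; induction n with
      | zero => exact hx
      | succ n ih => rw [hgsucc]; exact hFsub _ ih
    have hgκ : ∀ n, #(g n) < κ := by
      intro n; induction n with
      | zero => exact hxκ
      | succ n ih => rw [hgsucc]; exact hFcard _ ih
    have hgmono : ∀ n, g n ⊆ g (n + 1) := fun n => by rw [hgsucc]; exact hFincl _
    refine ⟨⋃ n : ULift.{u+1} ℕ, g n.down, ⟨?_, ?_, ?_⟩, ?_⟩
    · exact Set.iUnion_subset fun n => hgH n.down
    · refine lt_of_le_of_lt (Cardinal.mk_iUnion_le _) ?_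
      refine Cardinal.mul_lt_of_lt hreg.aleph0_le ?_
        (Cardinal.iSup_lt_of_isRegular hreg ?_ fun n => hgκ n.down)
      all_goals simpa using hunc
    · rintro y hyM hy1 hy2
      simp only [Set.mem_iUnion] at hyM
      obtain ⟨n, hyn⟩ := hyM
      exact (hFB (g n.down) y hyn hy1 hy2).trans <|
        (hgsucc n.down ▸ Set.subset_iUnion (fun m : ULift.{u+1} ℕ => g m.down) ⟨n.down + 1⟩)
    · exact fun z hz => Set.mem_iUnion.mpr ⟨⟨0⟩, hz⟩
  · -- the guessing property
    rintro M ⟨hMH, hMκ, hMcl⟩ - y hyM hy1 hy2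
    have hBM : B y ⊆ M := hMcl y hyM hy1 hy2
    have hY'M : Y' y ⊆ M ∩ X := fun z hz =>
      ⟨hBM (Or.inl hz), (hC.1 _ (hY' y hy1 hy2).1).1 hz⟩
    have hs₀ : (d (M ∩ X) ∩ Y' y) ∈ S (Y' y) := by
      refine ⟨M ∩ X, Set.inter_subset_right, ?_, fun z hz => hY'M hz, rfl⟩
      exact lt_of_le_of_lt (Cardinal.mk_le_mk_of_subset Set.inter_subset_left) hMκ
    refine ⟨ZFSet.sep (· ∈ d (M ∩ X) ∩ Y' y) y, hBM (Or.inr ⟨_, hs₀, rfl⟩), ?_⟩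
    ext z
    rw [show ∀ (a : ZFSet.{u}) (p : ZFSet.{u} → Prop), (ZFSet.sep p a).toSet = {x ∈ a.toSet | p x} from ZFSet.coe_sep]
    constructor
    · rintro ⟨hzy, hzd, -⟩
      exact ⟨hzd, hzy⟩
    · rintro ⟨hzd, hzy⟩
      exact ⟨hzy, hzd, (hY' y hy1 hy2).2 hzy⟩
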